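/- arXiv:1403.1988 — 2 statements merged into one kernel-verified Lean document; each statement's English description precedes it below -/
import Mathlib

section
/- Fix 0 < p < 1. Let E : ℕ → ℝ satisfy E(0) = 0 and, for all n ≥ 1, E(n) = 1 + p·E(n−1) + ((1−p)/n)·Σ_{k=1}^{n} E(k−1). Then (1−p)·E(n) − H_n converges to ln(1−p) as n → ∞. -/
open Finset Filter

/-- The `n`-th harmonic number `H_n = ∑_{k=1}^n 1/k`, with `H 0 = 0`. -/
noncomputable def H (n : ℕ) : ℝ := ∑ k ∈ Finset.Icc 1 n, (1 : ℝ) / k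

noncomputable def F (p : ℝ) (n : ℕ) : ℝ :=
  (∑ k ∈ Finset.range n, (1 - p ^ (k + 1)) / (k + 1)) / (1 - p)

lemma sumF (p : ℝ) (hp : p ≠ 1) (n : ℕ) :
    ∑ j ∈ Finset.range n, F p j =
      (n : ℝ) * F p n - (∑ i ∈ Finset.range n, (1 - p ^ (i + 1))) / (1 - p) := by
  have h1 : (1 : ℝ) - p ≠ 0 := sub_ne_zero.mpr (Ne.symm hp)
  induction n with
  | zero => simp [F]
  | succ m ih =>
    rw [Finset.sum_range_succ, ih]
    have hm : ((m : ℝ) + 1) ≠ 0 := by positivity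
    simp only [F, Finset.sum_range_succ]
    push_cast
    field_simp
    ring

lemma geomsum (p : ℝ) (hp : p ≠ 1) (n : ℕ) :
    ∑ i ∈ Finset.range n, (1 - p ^ (i + 1)) = (n : ℝ) - p * (1 - p ^ n) / (1 - p) := by
  have h1 : (1 : ℝ) - p ≠ 0 := sub_ne_zero.mpr (Ne.symm hp)
  induction n with
  | zero => simp
  | succ m ih =>
    rw [Finset.sum_range_succ, ih]
    push_cast
    field_simp
    ring

lemma Frec (p : ℝ) (hp : p ≠ 1) (n : ℕ) :
    F p (n + 1) = 1 + p * F p n +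
      ((1 - p) / ((n : ℝ) + 1)) * ∑ j ∈ Finset.range (n + 1), F p j := by
  have h1 : (1 : ℝ) - p ≠ 0 := sub_ne_zero.mpr (Ne.symm hp)
  have hm : ((n : ℝ) + 1) ≠ 0 := by positivity
  rw [sumF p hp, geomsum p hp]
  simp only [F, Finset.sum_range_succ]
  push_cast
  field_simp
  ring

lemma icc_range (f : ℕ → ℝ) (n : ℕ) :
    ∑ k ∈ Finset.Icc 1 n, f k = ∑ j ∈ Finset.range n, f (j + 1) := by
  induction n with
  | zero => simp
  | succ m ih =>
    rw [Finset.sum_Icc_succ_top (Nat.succ_le_succ (Nat.zero_le m)), ih,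
      Finset.sum_range_succ]

theorem stmt_3 (p : ℝ) (hp0 : 0 < p) (hp1 : p < 1) (E : ℕ → ℝ) (hE0 : E 0 = 0)
    (hrec : ∀ n : ℕ, 1 ≤ n →
      E n = 1 + p * E (n - 1) + ((1 - p) / (n : ℝ)) * ∑ k ∈ Finset.Icc 1 n, E (k - 1)) :
    Tendsto (fun n : ℕ => (1 - p) * E n - H n) atTop (nhds (Real.log (1 - p))) := by
  have hp : p ≠ 1 := ne_of_lt hp1
  have h1 : (1 : ℝ) - p ≠ 0 := sub_ne_zero.mpr (Ne.symm hp)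
  have key : ∀ n, E n = F p n := by
    intro n
    induction n using Nat.strong_induction_on with
    | _ n ih =>
      match n, ih with
      | 0, _ => simpa [F] using hE0
      | Nat.succ m, ih =>
        have h := hrec (m + 1) (Nat.succ_le_succ (Nat.zero_le m))
        have hsum : ∑ k ∈ Finset.Icc 1 (m + 1), E (k - 1)
            = ∑ j ∈ Finset.range (m + 1), F p j := by
          rw [icc_range (fun k => E (k - 1))]
          refine Finset.sum_congr rfl fun j hj => ?_
          simp only [Nat.add_sub_cancel]
          exact ih j (by simpa using Finset.mem_range.mp hj)
        rw [hsum] at h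
        simp only [Nat.add_sub_cancel, ih m (Nat.lt_succ_self m)] at h
        show E (m + 1) = F p (m + 1)
        rw [h, Frec p hp m]
        push_cast
        ring
  have heq : ∀ n, (1 - p) * E n - H n
      = -∑ k ∈ Finset.range n, p ^ (k + 1) / ((k : ℝ) + 1) := by
    intro n
    rw [key n]
    unfold F H
    rw [icc_range (fun k => (1 : ℝ) / k)]
    rw [mul_div_cancel₀ _ h1, ← Finset.sum_sub_distrib, ← Finset.sum_neg_distrib]
    refine Finset.sum_congr rfl fun k _ => ?_
    push_cast
    have hk : ((k : ℝ) + 1) ≠ 0 := by positivity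
    field_simp
    ring
  have hs := Real.hasSum_pow_div_log_of_abs_lt_one
    (x := p) (by rw [abs_of_pos hp0]; exact hp1)
  have htend := hs.tendsto_sum_nat.neg
  rw [neg_neg] at htend
  exact htend.congr fun n => (heq n).symm
end

section
/- Let L : ℕ → ℝ satisfy L(0) = 0 and, for all n ≥ 1, L(n) = 1 + (1/H_n)·Σ_{k=1}^{n} (1/k)·L(k−1). Then L(n)/ln(ln n) converges to 1 as n → ∞. -/
open Finset Filter

lemma H_succ (n : ℕ) : H (n + 1) = H n + 1 / ((n : ℝ) + 1) := by
  rw [H, H, Finset.sum_Icc_succ_top (by omega)]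
  push_cast; ring

lemma H_one : H 1 = 1 := by simp [H]

lemma one_le_H {n : ℕ} (hn : 1 ≤ n) : 1 ≤ H n := by
  induction n with
  | zero => omega
  | succ m ih =>
    rcases Nat.eq_zero_or_pos m with h | h
    · subst h; simp [H_one]
    · have h2 : (0:ℝ) ≤ 1 / ((m:ℝ) + 1) := by positivity
      have := ih h
      rw [H_succ]; linarith

lemma H_pos {n : ℕ} (hn : 1 ≤ n) : 0 < H n := lt_of_lt_of_le one_pos (one_le_H hn)

lemma H_eq_harmonic (n : ℕ) : H n = (harmonic n : ℝ) := by
  rw [H, harmonic_eq_sum_Icc]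
  push_cast
  simp [one_div]

lemma log_sub_le {a b : ℝ} (ha : 0 < a) (hb : 0 < b) :
    Real.log a - Real.log b ≤ (a - b) / b := by
  rw [← Real.log_div ha.ne' hb.ne']
  have h := Real.log_le_sub_one_of_pos (div_pos ha hb)
  have : a / b - 1 = (a - b) / b := by field_simp
  linarith

noncomputable def M (n : ℕ) : ℝ := ∑ k ∈ Finset.Icc 1 n, 1 / ((k : ℝ) * H k)

lemma M_succ (n : ℕ) : M (n + 1) = M n + 1 / (((n : ℝ) + 1) * H (n + 1)) := by
  rw [M, M, Finset.sum_Icc_succ_top (by omega)]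
  push_cast; ring

lemma M_one : M 1 = 1 := by simp [M, H_one]

lemma L_succ (L : ℕ → ℝ)
    (hrec : ∀ n : ℕ, 1 ≤ n →
      L n = 1 + (1 / H n) * ∑ k ∈ Finset.Icc 1 n, (1 / (k : ℝ)) * L (k - 1))
    (n : ℕ) (hn : 1 ≤ n) :
    L (n + 1) = L n + 1 / (((n : ℝ) + 1) * H (n + 1)) := by
  have h1 := hrec (n + 1) (by omega)
  have h2 := hrec n hn
  rw [Finset.sum_Icc_succ_top (by omega)] at h1
  simp only [Nat.add_sub_cancel] at h1
  set S := ∑ k ∈ Finset.Icc 1 n, (1 / (k : ℝ)) * L (k - 1) with hSdef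
  have hHn := H_pos hn
  have hHn1 := H_pos (n := n + 1) (by omega)
  have h3 : (1 / H n) * S = L n - 1 := by linarith
  have hS : S = H n * (L n - 1) := by rw [← h3]; field_simp
  rw [hS] at h1
  have hs := H_succ n
  have hn1 : (0:ℝ) < (n:ℝ) + 1 := by positivity
  have hy : H n + 1 / ((n:ℝ) + 1) ≠ 0 := by rw [← hs]; exact hHn1.ne'
  rw [h1, hs]
  push_cast
  field_simp
  ring

lemma L_eq_M (L : ℕ → ℝ) (hL0 : L 0 = 0)
    (hrec : ∀ n : ℕ, 1 ≤ n →
      L n = 1 + (1 / H n) * ∑ k ∈ Finset.Icc 1 n, (1 / (k : ℝ)) * L (k - 1))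
    {n : ℕ} (hn : 1 ≤ n) : L n = M n := by
  induction n with
  | zero => omega
  | succ m ih =>
    rcases Nat.eq_zero_or_pos m with h | h
    · subst h
      have h1 := hrec 1 le_rfl
      simp [H_one, hL0] at h1
      rw [h1, M_one]
    · rw [L_succ L hrec m h, M_succ, ih h]

lemma log_H_bounds : ∀ n : ℕ, 1 ≤ n →
    M n - 1 ≤ Real.log (H n) ∧ Real.log (H n) ≤ M n - 1 / n := by
  intro n hn
  induction n with
  | zero => omega
  | succ m ih =>
    rcases Nat.eq_zero_or_pos m with h | h
    · subst h
      simp [M_one, H_one]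
    · obtain ⟨ih1, ih2⟩ := ih h
      have hx := H_pos h
      have hy := H_pos (n := m + 1) (by omega)
      have hx1 := one_le_H h
      have hy1 := one_le_H (n := m + 1) (by omega)
      have hs := H_succ m
      have hm1 : (0:ℝ) < (m:ℝ) + 1 := by positivity
      have hm : (1:ℝ) ≤ (m:ℝ) := by exact_mod_cast h
      push_cast [M_succ]
      constructor
      · -- lower bound
        have hlow := log_sub_le hx hy
        have e : (H m - H (m + 1)) / H (m + 1) = -(1 / (((m:ℝ) + 1) * H (m + 1))) := by
          rw [hs]; field_simp; ring
        rw [e] at hlow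
        linarith
      · -- upper bound
        have hup := log_sub_le hy hx
        have e : (H (m + 1) - H m) / H m = 1 / (((m:ℝ) + 1) * H m) := by
          rw [hs]; field_simp; ring
        rw [e] at hup
        have key : 1 / (((m:ℝ) + 1) * H m) - 1 / (((m:ℝ) + 1) * H (m + 1)) ≤
            1 / (m:ℝ) - 1 / ((m:ℝ) + 1) := by
          have e2 : 1 / (((m:ℝ) + 1) * H m) - 1 / (((m:ℝ) + 1) * H (m + 1)) =
              1 / (((m:ℝ) + 1) ^ 2 * H m * H (m + 1)) := by
            rw [hs]; field_simp; ring
          have e3 : 1 / (m:ℝ) - 1 / ((m:ℝ) + 1) = 1 / ((m:ℝ) * ((m:ℝ) + 1)) := by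
            field_simp; ring
          rw [e2, e3]
          apply one_div_le_one_div_of_le (by positivity)
          have h4 : (1:ℝ) ≤ H m * H (m + 1) := by nlinarith
          nlinarith [mul_le_mul_of_nonneg_left h4 (by positivity : (0:ℝ) ≤ ((m:ℝ)+1)^2)]
        linarith

lemma H_bounds {n : ℕ} (hn : 1 ≤ n) :
    Real.log n ≤ H n ∧ H n ≤ 1 + Real.log n := by
  rw [H_eq_harmonic]
  refine ⟨le_trans ?_ (log_add_one_le_harmonic n), harmonic_le_one_add_log n⟩
  apply Real.log_le_log (by exact_mod_cast hn)
  push_cast; linarith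

lemma hll : Tendsto (fun n : ℕ => Real.log (Real.log n)) atTop atTop :=
  Real.tendsto_log_atTop.comp (Real.tendsto_log_atTop.comp tendsto_natCast_atTop_atTop)

lemma hlog : Tendsto (fun n : ℕ => Real.log n) atTop atTop :=
  Real.tendsto_log_atTop.comp tendsto_natCast_atTop_atTop

lemma hdiff : Tendsto (fun n : ℕ => Real.log (H n) - Real.log (Real.log n))
    atTop (nhds 0) := by
  apply squeeze_zero_norm' (a := fun n : ℕ => 1 / Real.log n)
  · filter_upwards [hlog.eventually_ge_atTop 1, eventually_ge_atTop 1] with n h1 hn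
    have hlpos : (0:ℝ) < Real.log n := by linarith
    obtain ⟨hb1, hb2⟩ := H_bounds hn
    have hHpos := H_pos hn
    have hup : Real.log (H n) - Real.log (Real.log n) ≤ 1 / Real.log n := by
      have := log_sub_le hHpos hlpos
      have h2 : (H n - Real.log n) / Real.log n ≤ 1 / Real.log n := by
        gcongr; linarith
      linarith
    have hlo : 0 ≤ Real.log (H n) - Real.log (Real.log n) := by
      have := Real.log_le_log hlpos hb1
      linarith
    rw [Real.norm_eq_abs, abs_of_nonneg hlo]
    exact hup
  · exact tendsto_const_nhds.div_atTop hlog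

theorem stmt_13 (L : ℕ → ℝ) (hL0 : L 0 = 0)
    (hrec : ∀ n : ℕ, 1 ≤ n →
      L n = 1 + (1 / H n) * ∑ k ∈ Finset.Icc 1 n, (1 / (k : ℝ)) * L (k - 1)) :
    Tendsto (fun n : ℕ => L n / Real.log (Real.log n)) atTop (nhds 1) := by
  have hM : ∀ᶠ n in atTop, |L n - Real.log (H n)| ≤ 1 := by
    filter_upwards [eventually_ge_atTop 1] with n hn
    obtain ⟨hb1, hb2⟩ := log_H_bounds n hn
    rw [L_eq_M L hL0 hrec hn]
    have hn' : (0:ℝ) < 1 / (n:ℝ) := by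
      have : (0:ℝ) < (n:ℝ) := by exact_mod_cast hn
      positivity
    rw [abs_le]; constructor <;> linarith
  have hb : ∀ᶠ n in atTop, |L n - Real.log (Real.log n)| ≤ 2 := by
    have hd1 : ∀ᶠ n in atTop, |Real.log (H n) - Real.log (Real.log n)| ≤ 1 := by
      have := hdiff.eventually (Metric.ball_mem_nhds (0:ℝ) one_pos)
      filter_upwards [this] with n h
      simp only [Metric.mem_ball, Real.dist_eq, sub_zero] at h
      exact h.le
    filter_upwards [hM, hd1] with n h1 h2
    calc |L n - Real.log (Real.log n)|
        ≤ |L n - Real.log (H n)| + |Real.log (H n) - Real.log (Real.log n)| := by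
          apply abs_sub_le
      _ ≤ 2 := by linarith
  have h0 : Tendsto (fun n : ℕ =>
      (L n - Real.log (Real.log n)) / Real.log (Real.log n)) atTop (nhds 0) := by
    apply squeeze_zero_norm' (a := fun n : ℕ => 2 / Real.log (Real.log n))
    · filter_upwards [hb, hll.eventually_ge_atTop 1] with n h1 h2
      rw [Real.norm_eq_abs, abs_div, abs_of_nonneg (by linarith : (0:ℝ) ≤ Real.log (Real.log n))]
      gcongr
    · exact tendsto_const_nhds.div_atTop hll
  have h1 : Tendsto (fun n : ℕ =>
      (L n - Real.log (Real.log n)) / Real.log (Real.log n) + 1) atTop (nhds 1) := by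
    have := h0.add (tendsto_const_nhds : Tendsto (fun _ : ℕ => (1:ℝ)) atTop (nhds 1))
    simpa using this
  apply h1.congr'
  filter_upwards [hll.eventually_ge_atTop 1] with n h
  have hne : Real.log (Real.log n) ≠ 0 := by linarith
  field_simp; ring
end
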